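/- arXiv:1912.12711 — 6 statements merged into one kernel-verified Lean document; each statement's English description precedes it below -/
import Mathlib

section
/- For all real numbers α > −1 and β > 0 and every z ∈ ℂ, the classical Sonine formula holds: j_{α+β}(z) = (2 Γ(α+β+1) / (Γ(α+1) Γ(β))) · ∫₀¹ j_α(z·x) · x^{2α+1} · (1−x²)^{β−1} dx. -/
open MeasureTheory

/-- The normalized one-dimensional Bessel function
`j_μ(z) = Σ_{m=0}^∞ ((−1)^m Γ(μ+1))/(m! Γ(μ+m+1)) · (z/2)^{2m}`. -/
noncomputable def besselj (μ : ℝ) (z : ℂ) : ℂ :=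
  ∑' m : ℕ, ((-1 : ℂ) ^ m * (Real.Gamma (μ + 1) : ℂ)) /
      ((m.factorial : ℂ) * (Real.Gamma (μ + m + 1) : ℂ)) * (z / 2) ^ (2 * m)

section SonineAux

open Set

lemma sonine_coeff (G0 G1 G2 G3 G4 M s w : ℂ)
    (e1 : G1 ≠ 0) (e2 : G3 ≠ 0) (e3 : G2 ≠ 0) :
    s * G0 / (M * G4) * w
      = 2 * G0 / (G1 * G3) * (s * G1 / (M * G2) * w * (G2 * G3 / G4 / 2)) := by
  rw [show 2 * G0 / (G1 * G3) * (s * G1 / (M * G2) * w * (G2 * G3 / G4 / 2))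
      = s * G0 / (M * G4) * w * (G1 / G1) * (G2 / G2) * (G3 / G3) by ring,
    div_self e1, div_self e3, div_self e2, mul_one, mul_one, mul_one]

lemma sonine_realBeta (a b : ℝ) (ha : 0 < a) (hb : 0 < b) :
    ∫ x in (0:ℝ)..1, x ^ (a-1) * (1-x) ^ (b-1) =
      Real.Gamma a * Real.Gamma b / Real.Gamma (a+b) := by
  have hG : Real.Gamma (a+b) ≠ 0 := (Real.Gamma_pos_of_pos (by linarith)).ne'
  have key := Complex.Gamma_mul_Gamma_eq_betaIntegral
    (s := (a:ℂ)) (t := (b:ℂ)) (by simpa using ha) (by simpa using hb)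
  have hB : Complex.betaIntegral a b
      = ((∫ x in (0:ℝ)..1, x ^ (a-1) * (1-x) ^ (b-1) : ℝ) : ℂ) := by
    rw [Complex.betaIntegral, ← intervalIntegral.integral_ofReal]
    refine intervalIntegral.integral_congr fun x hx => ?_
    rw [Set.uIcc_of_le zero_le_one] at hx
    rw [Complex.ofReal_mul, Complex.ofReal_cpow hx.1, Complex.ofReal_cpow (by linarith [hx.2])]
    push_cast
    ring
  rw [hB, ← Complex.ofReal_add, Complex.Gamma_ofReal, Complex.Gamma_ofReal,
    Complex.Gamma_ofReal, ← Complex.ofReal_mul, ← Complex.ofReal_mul] at key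
  have := Complex.ofReal_inj.mp key
  field_simp at this ⊢
  linarith [this]

lemma sonine_Gamma_add_nat_ge {x : ℝ} (hx : 0 < x) (m : ℕ) :
    min (Real.Gamma x) (Real.Gamma (x+1)) ≤ Real.Gamma (x + m) := by
  induction m with
  | zero => simpa using min_le_left _ _
  | succ n ih =>
    rcases Nat.eq_zero_or_pos n with h | h
    · subst h; simpa using min_le_right _ _
    · have h1 : (1:ℝ) ≤ x + n := by
        have : (1:ℝ) ≤ (n:ℝ) := by exact_mod_cast h
        linarith
      have hne : x + (n:ℝ) ≠ 0 := by linarith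
      have hrec : Real.Gamma (x + (n+1:ℕ)) = (x + n) * Real.Gamma (x + n) := by
        push_cast
        rw [show x + ((n:ℝ)+1) = (x + n) + 1 by ring, Real.Gamma_add_one hne]
      rw [hrec]
      calc min (Real.Gamma x) (Real.Gamma (x+1)) ≤ Real.Gamma (x + n) := ih
        _ ≤ (x + n) * Real.Gamma (x + n) :=
          le_mul_of_one_le_left (Real.Gamma_pos_of_pos (by linarith)).le h1

lemma sonine_sq_image_Ioo : (fun x : ℝ => x ^ 2) '' Ioo 0 1 = Ioo 0 1 := by
  ext u
  constructor
  · rintro ⟨x, ⟨hx0, hx1⟩, rfl⟩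
    refine ⟨pow_pos hx0 2, ?_⟩
    show x ^ 2 < 1
    nlinarith
  · rintro ⟨hu0, hu1⟩
    refine ⟨Real.sqrt u, ⟨Real.sqrt_pos.mpr hu0, ?_⟩, Real.sq_sqrt hu0.le⟩
    rw [show (1:ℝ) = Real.sqrt 1 by simp]
    exact Real.sqrt_lt_sqrt hu0.le hu1

lemma sonine_sq_injOn : InjOn (fun x : ℝ => x ^ 2) (Ioo 0 1) := by
  intro x hx y hy h
  simp only at h
  nlinarith [hx.1, hy.1]

lemma sonine_cov (g : ℝ → ℝ) :
    ∫ u in Ioo (0:ℝ) 1, g u = ∫ x in Ioo (0:ℝ) 1, |2 * x| • g (x ^ 2) := by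
  have := integral_image_eq_integral_abs_deriv_smul (f := fun x : ℝ => x ^ 2)
    (f' := fun x => 2 * x) (measurableSet_Ioo (a := (0:ℝ)) (b := 1))
    (fun x _ => by simpa using (hasDerivAt_pow 2 x).hasDerivWithinAt) sonine_sq_injOn g
  rwa [sonine_sq_image_Ioo] at this

lemma sonine_cov_integrable (g : ℝ → ℝ) :
    IntegrableOn g (Ioo (0:ℝ) 1) ↔
      IntegrableOn (fun x => |2 * x| • g (x ^ 2)) (Ioo (0:ℝ) 1) := by
  have := integrableOn_image_iff_integrableOn_abs_deriv_smul (f := fun x : ℝ => x ^ 2)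
    (f' := fun x => 2 * x) (measurableSet_Ioo (a := (0:ℝ)) (b := 1))
    (fun x _ => by simpa using (hasDerivAt_pow 2 x).hasDerivWithinAt) sonine_sq_injOn g
  rwa [sonine_sq_image_Ioo] at this

lemma sonine_pointwise_cov {α β : ℝ} (m : ℕ) {x : ℝ} (hx : x ∈ Ioo (0:ℝ) 1) :
    |2 * x| • ((x ^ 2) ^ (((m:ℝ)+α+1)-1) * (1 - x ^ 2) ^ (β-1)) =
      2 * (x ^ (2*m) * (x ^ (2*α+1) * (1 - x ^ 2) ^ (β-1))) := by
  obtain ⟨hx0, _⟩ := hx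
  have h1 : ((x:ℝ) ^ 2) ^ (((m:ℝ)+α+1)-1 : ℝ) = x ^ (2*m) * x ^ (2*α) := by
    rw [← Real.rpow_natCast x 2, ← Real.rpow_mul hx0.le,
      show ((2:ℕ):ℝ) * (((m:ℝ)+α+1)-1) = ((2*m : ℕ):ℝ) + 2*α by push_cast; ring,
      Real.rpow_add hx0, Real.rpow_natCast]
  have h2 : x ^ (2*α+1 : ℝ) = x * x ^ (2*α : ℝ) := by
    rw [Real.rpow_add hx0, Real.rpow_one]; ring
  rw [abs_of_nonneg (by linarith), smul_eq_mul, h1, h2]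
  ring

lemma sonine_moment {α β : ℝ} (hα : -1 < α) (hβ : 0 < β) (m : ℕ) :
    ∫ x in Ioc (0:ℝ) 1, x ^ (2*m) * (x ^ (2*α+1) * (1 - x ^ 2) ^ (β-1)) =
      Real.Gamma (α+(m:ℝ)+1) * Real.Gamma β / Real.Gamma (α+β+(m:ℝ)+1) / 2 := by
  have ha : (0:ℝ) < (m:ℝ)+α+1 := by have := Nat.cast_nonneg (α := ℝ) m; linarith
  have key := sonine_cov (fun u => u ^ (((m:ℝ)+α+1)-1) * (1-u) ^ (β-1))
  rw [setIntegral_congr_fun measurableSet_Ioo (fun x hx => sonine_pointwise_cov m hx),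
    MeasureTheory.integral_const_mul] at key
  have hbeta : ∫ u in Ioo (0:ℝ) 1, u ^ (((m:ℝ)+α+1)-1) * (1-u) ^ (β-1) =
      Real.Gamma ((m:ℝ)+α+1) * Real.Gamma β / Real.Gamma ((m:ℝ)+α+1+β) := by
    rw [← integral_Ioc_eq_integral_Ioo, ← intervalIntegral.integral_of_le zero_le_one]
    exact sonine_realBeta _ _ ha hβ
  rw [show α+(m:ℝ)+1 = (m:ℝ)+α+1 by ring, show α+β+(m:ℝ)+1 = (m:ℝ)+α+1+β by ring]
  rw [integral_Ioc_eq_integral_Ioo]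
  rw [key] at hbeta
  linarith

lemma sonine_beta_integrable {a b : ℝ} (ha : 0 < a) (hb : 0 < b) :
    IntegrableOn (fun u : ℝ => u ^ (a-1) * (1-u) ^ (b-1)) (Ioo (0:ℝ) 1) := by
  have h := Complex.betaIntegral_convergent (u := (a:ℂ)) (v := (b:ℂ))
    (by simpa using ha) (by simpa using hb)
  rw [intervalIntegrable_iff_integrableOn_Ioc_of_le zero_le_one] at h
  have h2 : IntegrableOn (fun x : ℝ => ‖(x:ℂ) ^ ((a:ℂ)-1) * (1-(x:ℂ)) ^ ((b:ℂ)-1)‖)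
      (Ioo (0:ℝ) 1) := (h.mono_set Ioo_subset_Ioc_self).norm
  refine h2.congr_fun (fun x hx => ?_) measurableSet_Ioo
  obtain ⟨hx0, hx1⟩ := hx
  beta_reduce
  rw [show ((a:ℂ)-1) = ((a-1 : ℝ):ℂ) by push_cast; ring,
    show ((b:ℂ)-1) = ((b-1:ℝ):ℂ) by push_cast; ring,
    show (1 - (x:ℂ)) = ((1-x:ℝ):ℂ) by push_cast; ring,
    ← Complex.ofReal_cpow hx0.le, ← Complex.ofReal_cpow (by linarith : (0:ℝ) ≤ 1-x),
    ← Complex.ofReal_mul, Complex.norm_real]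
  exact abs_of_nonneg (mul_nonneg (Real.rpow_nonneg hx0.le _)
    (Real.rpow_nonneg (by linarith) _))

lemma sonine_g_integrable {α β : ℝ} (hα : -1 < α) (hβ : 0 < β) (m : ℕ) :
    IntegrableOn (fun x : ℝ => x ^ (2*m) * (x ^ (2*α+1) * (1 - x ^ 2) ^ (β-1)))
      (Ioc (0:ℝ) 1) := by
  rw [integrableOn_Ioc_iff_integrableOn_Ioo]
  have ha : (0:ℝ) < (m:ℝ)+α+1 := by have := Nat.cast_nonneg (α := ℝ) m; linarith
  have hb := sonine_beta_integrable ha hβ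
  have h2 := (sonine_cov_integrable _).mp hb
  have h3 : IntegrableOn
      (fun x : ℝ => 2 * (x ^ (2*m) * (x ^ (2*α+1) * (1 - x ^ 2) ^ (β-1))))
      (Ioo (0:ℝ) 1) :=
    h2.congr_fun (fun x hx => sonine_pointwise_cov m hx) measurableSet_Ioo
  have h4 : IntegrableOn
      (fun x : ℝ => (2:ℝ)⁻¹ * (2 * (x ^ (2*m) * (x ^ (2*α+1) * (1 - x ^ 2) ^ (β-1)))))
      (Ioo (0:ℝ) 1) := h3.const_mul _
  exact h4.congr_fun (fun x _ => by ring) measurableSet_Ioo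

end SonineAux

set_option maxHeartbeats 1000000 in
/-- The classical Sonine formula: for `α > -1`, `β > 0` and `z ∈ ℂ`,
`j_{α+β}(z) = (2 Γ(α+β+1) / (Γ(α+1) Γ(β))) · ∫₀¹ j_α(zx) x^{2α+1} (1−x²)^{β−1} dx`. -/
theorem sonine_formula (α β : ℝ) (hα : -1 < α) (hβ : 0 < β) (z : ℂ) :
    besselj (α + β) z =
      ((2 * Real.Gamma (α + β + 1) / (Real.Gamma (α + 1) * Real.Gamma β) : ℝ) : ℂ) *
        ∫ x in (0:ℝ)..1, besselj α (z * (x : ℂ)) * ((x ^ (2 * α + 1) : ℝ) : ℂ) *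
          (((1 - x ^ 2) ^ (β - 1) : ℝ) : ℂ) := by
  open Set in
  have hΓa : (0:ℝ) < Real.Gamma (α+1) := Real.Gamma_pos_of_pos (by linarith)
  have hΓb : (0:ℝ) < Real.Gamma β := Real.Gamma_pos_of_pos hβ
  set c : ℕ → ℂ := fun m => ((-1:ℂ)^m * (Real.Gamma (α+1):ℂ)) /
      ((m.factorial:ℂ) * (Real.Gamma (α+(m:ℝ)+1):ℂ)) * (z/2)^(2*m) with hc
  set g : ℕ → ℝ → ℝ := fun m x => x ^ (2*m) * (x ^ (2*α+1) * (1-x^2)^(β-1)) with hg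
  have hgpos : ∀ m : ℕ, ∀ x ∈ Ioc (0:ℝ) 1, 0 ≤ g m x := by
    intro m x hx
    exact mul_nonneg (pow_nonneg hx.1.le _) (mul_nonneg (Real.rpow_nonneg hx.1.le _)
      (Real.rpow_nonneg (by nlinarith [hx.1, hx.2]) _))
  have hpt : ∀ x : ℝ, besselj α (z*(x:ℂ)) * ((x ^ (2*α+1) : ℝ):ℂ) * (((1-x^2)^(β-1) : ℝ):ℂ)
      = ∑' m : ℕ, c m * ((g m x : ℝ):ℂ) := by
    intro x
    rw [besselj, mul_assoc, ← tsum_mul_right]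
    refine tsum_congr fun m => ?_
    simp only [hc, hg]
    push_cast
    ring
  have hInt : ∀ m : ℕ, IntegrableOn (fun x : ℝ => c m * ((g m x : ℝ):ℂ)) (Ioc (0:ℝ) 1) := by
    intro m
    exact (Integrable.ofReal (sonine_g_integrable hα hβ m)).const_mul (c m)
  have hcm : ∀ m : ℕ, ‖c m‖ = Real.Gamma (α+1) / (m.factorial * Real.Gamma (α+(m:ℝ)+1))
      * ‖z/2‖^(2*m) := by
    intro m
    have h2 : (0:ℝ) < Real.Gamma (α+(m:ℝ)+1) :=
      Real.Gamma_pos_of_pos (by have := Nat.cast_nonneg (α := ℝ) m; linarith)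
    simp [hc, norm_mul, norm_div, norm_pow, Complex.norm_real,
      abs_of_pos hΓa, abs_of_pos h2]
  have hnorm : ∀ m : ℕ, (∫ x in Ioc (0:ℝ) 1, ‖c m * ((g m x : ℝ):ℂ)‖)
      = ‖c m‖ * (Real.Gamma (α+(m:ℝ)+1) * Real.Gamma β / Real.Gamma (α+β+(m:ℝ)+1) / 2) := by
    intro m
    rw [← sonine_moment hα hβ m, ← MeasureTheory.integral_const_mul]
    refine setIntegral_congr_fun measurableSet_Ioc (fun x hx => ?_)
    rw [norm_mul, Complex.norm_real, Real.norm_eq_abs, abs_of_nonneg (hgpos m x hx)]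
  have hSum : Summable (fun m : ℕ => ∫ x in Ioc (0:ℝ) 1, ‖c m * ((g m x : ℝ):ℂ)‖) := by
    set δ := min (Real.Gamma (α+β+1)) (Real.Gamma (α+β+2)) with hδ
    have hδ0 : 0 < δ := lt_min (Real.Gamma_pos_of_pos (by linarith))
      (Real.Gamma_pos_of_pos (by linarith))
    refine Summable.of_nonneg_of_le (fun m => integral_nonneg fun x => norm_nonneg _)
      (fun m => ?_)
      ((Real.summable_pow_div_factorial (‖z/2‖^2)).mul_left
        (Real.Gamma (α+1) * Real.Gamma β / (2*δ)))
    have hm0 : (0:ℝ) ≤ (m:ℝ) := Nat.cast_nonneg m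
    have h2 : (0:ℝ) < Real.Gamma (α+(m:ℝ)+1) := Real.Gamma_pos_of_pos (by linarith)
    have h4 : δ ≤ Real.Gamma (α+β+(m:ℝ)+1) := by
      have := sonine_Gamma_add_nat_ge (x := α+β+1) (by linarith) m
      rwa [show α+β+1+(m:ℝ) = α+β+(m:ℝ)+1 by ring, show α+β+1+1 = α+β+2 by ring] at this
    have hM : (0:ℝ) < (m.factorial : ℝ) := by positivity
    rw [hnorm m, hcm m, pow_mul]
    set G1 := Real.Gamma (α+1) with hG1
    set G2 := Real.Gamma (α+(m:ℝ)+1) with hG2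
    set G3 := Real.Gamma β with hG3
    set G4 := Real.Gamma (α+β+(m:ℝ)+1) with hG4
    rw [show G1 / ((m.factorial:ℝ) * G2) * (‖z/2‖^2)^m * (G2 * G3 / G4 / 2)
        = G1 * G3 / (2 * G4) * ((‖z/2‖^2)^m / (m.factorial:ℝ)) * (G2 / G2) by ring,
      div_self h2.ne', mul_one]
    gcongr
  have swap := MeasureTheory.integral_tsum_of_summable_integral_norm
    (F := fun (m : ℕ) (x : ℝ) => c m * ((g m x : ℝ):ℂ))
    (μ := volume.restrict (Ioc (0:ℝ) 1)) hInt hSum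
  rw [intervalIntegral.integral_of_le zero_le_one]
  simp only [hpt]
  rw [← swap]
  have hint_val : ∀ m : ℕ, (∫ x in Ioc (0:ℝ) 1, c m * ((g m x : ℝ):ℂ))
      = c m * ((Real.Gamma (α+(m:ℝ)+1) * Real.Gamma β / Real.Gamma (α+β+(m:ℝ)+1) / 2 : ℝ):ℂ) := by
    intro m
    have hor : (∫ x in Ioc (0:ℝ) 1, ((g m x : ℝ) : ℂ)) =
        ((∫ x in Ioc (0:ℝ) 1, g m x : ℝ) : ℂ) := integral_ofReal
    rw [MeasureTheory.integral_const_mul, hor, sonine_moment hα hβ m]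
  simp only [hint_val]
  rw [besselj, ← tsum_mul_left]
  refine tsum_congr fun m => ?_
  have hm0 : (0:ℝ) ≤ (m:ℝ) := Nat.cast_nonneg m
  have h2 : (0:ℝ) < Real.Gamma (α+(m:ℝ)+1) := Real.Gamma_pos_of_pos (by linarith)
  have h4 : (0:ℝ) < Real.Gamma (α+β+(m:ℝ)+1) := Real.Gamma_pos_of_pos (by linarith)
  have e1 : (Real.Gamma (α+1) : ℂ) ≠ 0 := Complex.ofReal_ne_zero.mpr hΓa.ne'
  have e2 : (Real.Gamma β : ℂ) ≠ 0 := Complex.ofReal_ne_zero.mpr hΓb.ne'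
  have e3 : (Real.Gamma (α+(m:ℝ)+1) : ℂ) ≠ 0 := Complex.ofReal_ne_zero.mpr h2.ne'
  have e4 : (Real.Gamma (α+β+(m:ℝ)+1) : ℂ) ≠ 0 := Complex.ofReal_ne_zero.mpr h4.ne'
  have e5 : ((m.factorial : ℕ) : ℂ) ≠ 0 := by
    exact_mod_cast Nat.cast_ne_zero.mpr (Nat.factorial_ne_zero m)
  simp only [hc]
  set G0 := Real.Gamma (α+β+1) with hG0
  set G1 := Real.Gamma (α+1) with hG1
  set G2 := Real.Gamma (α+(m:ℝ)+1) with hG2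
  set G3 := Real.Gamma β with hG3
  set G4 := Real.Gamma (α+β+(m:ℝ)+1) with hG4
  push_cast
  linear_combination sonine_coeff (G0:ℂ) (G1:ℂ) (G2:ℂ) (G3:ℂ) (G4:ℂ)
    ((m.factorial : ℕ) : ℂ) ((-1:ℂ)^m) ((z/2)^(2*m)) e1 e2 e3
end

section
/- Let n ≥ 1 be an integer, α > 0 and μ ∈ ℝ with μ ≥ (n−1)/α + 1/2. Then for every partition λ of length at most n, the generalized Pochhammer symbol satisfies [μ]^α_λ ≥ (1/2)^{|λ|}. -/
open Finset

/-- The generalized Pochhammer symbol `[μ]^α_λ = ∏_{j=1}^n (μ − (j−1)/α)_{λ_j}`,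
for a partition `λ` of length at most `n` (indexed by `Fin n`, so `(j:ℕ)` plays
the role of `j−1`). -/
noncomputable def genPochhammer (n : ℕ) (α μ : ℝ) (lam : Fin n → ℕ) : ℝ :=
  ∏ j : Fin n, (ascPochhammer ℝ (lam j)).eval (μ - (j : ℕ) / α)

lemma asc_ge (c : ℝ) (hc : (1/2 : ℝ) ≤ c) (l : ℕ) :
    (1 / 2 : ℝ) ^ l ≤ (ascPochhammer ℝ l).eval c := by
  induction l with
  | zero => simp
  | succ m ih =>
    rw [ascPochhammer_succ_eval, pow_succ]
    have h1 : (1/2 : ℝ) ≤ c + m := le_trans hc (le_add_of_nonneg_right (Nat.cast_nonneg m))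
    have h2 : (0:ℝ) ≤ (1/2:ℝ)^m := by positivity
    nlinarith [pow_pos (by norm_num : (0:ℝ) < 1/2) m]

/-- For `n ≥ 1`, `α > 0` and `μ ≥ (n−1)/α + 1/2`, every partition `λ` of length
at most `n` satisfies `[μ]^α_λ ≥ (1/2)^{|λ|}`. -/
theorem genPochhammer_ge (n : ℕ) (hn : 1 ≤ n) (α μ : ℝ) (hα : 0 < α)
    (hμ : ((n : ℝ) - 1) / α + 1 / 2 ≤ μ) (lam : Fin n → ℕ) (hlam : Antitone lam) :
    (1 / 2 : ℝ) ^ (∑ j, lam j) ≤ genPochhammer n α μ lam := by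
  rw [genPochhammer, ← Finset.prod_pow_eq_pow_sum]
  apply Finset.prod_le_prod
  · intro j _; positivity
  · intro j _
    apply asc_ge
    have hj : (j : ℝ) ≤ (n : ℝ) - 1 := by
      have := j.2
      have : (j : ℕ) + 1 ≤ n := j.2
      have : ((j : ℕ) : ℝ) + 1 ≤ (n : ℝ) := by exact_mod_cast this
      linarith
    have : ((j : ℕ) : ℝ) / α ≤ ((n : ℝ) - 1) / α := by gcongr
    linarith
end

section
/- Let a ≥ −1/2, x ≥ 0 a real number and y ∈ ℝ. Then the normalized Laguerre polynomials converge to the normalized Bessel function: lim_{j→∞} L̃_{⌊jx⌋}^a(y²/j) = j_a(2y√x), where ⌊·⌋ denotes the floor function. -/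
open Finset Filter
open Topology

/-- The normalized Laguerre polynomial
`L̃_m^a(t) = Σ_{l=0}^m (m choose l) · ((−1)^l/(a+1)_l) · t^l`. -/
noncomputable def lagTilde (a : ℝ) (m : ℕ) (t : ℝ) : ℝ :=
  ∑ l ∈ Finset.range (m + 1),
    (m.choose l : ℝ) * ((-1 : ℝ) ^ l / (ascPochhammer ℝ l).eval (a + 1)) * t ^ l

private lemma poch_ge_half {a : ℝ} (ha : -(1 / 2 : ℝ) ≤ a) :
    ∀ l : ℕ, (1 / 2 : ℝ) ≤ (ascPochhammer ℝ l).eval (a + 1)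
  | 0 => by norm_num
  | (l + 1) => by
    rw [ascPochhammer_succ_eval]
    rcases Nat.eq_zero_or_pos l with rfl | hl
    · simp only [ascPochhammer_zero, Polynomial.eval_one, one_mul, Nat.cast_zero, add_zero]
      linarith
    · have h1 := poch_ge_half ha l
      have h2 : (1 : ℝ) ≤ (l : ℝ) := by exact_mod_cast hl
      nlinarith

private lemma gamma_poch {a : ℝ} (ha : 0 < a + 1) : ∀ m : ℕ,
    Real.Gamma (a + m + 1) = (ascPochhammer ℝ m).eval (a + 1) * Real.Gamma (a + 1)
  | 0 => by simp
  | (m + 1) => by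
    have h : a + ((m + 1 : ℕ) : ℝ) + 1 = (a + m + 1) + 1 := by push_cast; ring
    have hne : a + (m : ℝ) + 1 ≠ 0 := by
      have := Nat.cast_nonneg (α := ℝ) m; intro hc; nlinarith
    rw [h, Real.Gamma_add_one hne, gamma_poch ha m, ascPochhammer_succ_eval]
    push_cast
    ring

private lemma floor_div_tendsto {x : ℝ} (hx : 0 ≤ x) :
    Tendsto (fun j : ℕ => (⌊(j : ℝ) * x⌋₊ : ℝ) / j) atTop (𝓝 x) := by
  have h1 : Tendsto (fun j : ℕ => x - 1 / (j : ℝ)) atTop (𝓝 x) := by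
    simpa using tendsto_const_nhds.sub (tendsto_one_div_atTop_nhds_zero_nat (𝕜 := ℝ))
  refine tendsto_of_tendsto_of_tendsto_of_le_of_le' h1 tendsto_const_nhds ?_ ?_
  · filter_upwards [eventually_ge_atTop 1] with j hj
    have hj0 : (0 : ℝ) < (j : ℝ) := by exact_mod_cast hj
    have h2 : (j : ℝ) * x < ⌊(j : ℝ) * x⌋₊ + 1 := Nat.lt_floor_add_one _
    rw [le_div_iff₀ hj0]
    have h3 : (1 / (j : ℝ)) * (j : ℝ) = 1 := div_mul_cancel₀ _ hj0.ne'
    nlinarith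
  · filter_upwards [eventually_ge_atTop 1] with j hj
    have hj0 : (0 : ℝ) < (j : ℝ) := by exact_mod_cast hj
    have h2 : (⌊(j : ℝ) * x⌋₊ : ℝ) ≤ (j : ℝ) * x :=
      Nat.floor_le (by positivity)
    rw [div_le_iff₀ hj0]
    linarith

private lemma choose_cast_eq {M l : ℕ} (h : l ≤ M) :
    (M.choose l : ℝ) = (∏ i ∈ Finset.range l, ((M : ℝ) - i)) / l.factorial := by
  have h1 : (l.factorial * M.choose l : ℕ) = M.descFactorial l :=
    (Nat.descFactorial_eq_factorial_mul_choose M l).symm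
  have h2 : (M.descFactorial l : ℝ) = ∏ i ∈ Finset.range l, ((M : ℝ) - i) := by
    rw [Nat.descFactorial_eq_prod_range, Nat.cast_prod]
    refine Finset.prod_congr rfl fun i hi => ?_
    rw [Nat.cast_sub (le_trans (Finset.mem_range.mp hi).le h)]
  have h3 : (l.factorial : ℝ) * M.choose l = ∏ i ∈ Finset.range l, ((M : ℝ) - i) := by
    rw [← h2]; exact_mod_cast congrArg (Nat.cast (R := ℝ)) h1
  have hfac : (l.factorial : ℝ) ≠ 0 := by exact_mod_cast l.factorial_ne_zero
  rw [eq_div_iff hfac, mul_comm, h3]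

private lemma pointwise_choose (x : ℝ) (hx : 0 ≤ x) (l : ℕ) :
    Tendsto (fun j : ℕ => if l ≤ ⌊(j : ℝ) * x⌋₊ then
        ((⌊(j : ℝ) * x⌋₊.choose l : ℝ)) / (j : ℝ) ^ l else 0)
      atTop (𝓝 (x ^ l / l.factorial)) := by
  rcases eq_or_lt_of_le hx with rfl | hxpos
  · -- x = 0
    simp only [mul_zero, Nat.floor_zero, Nat.le_zero]
    rcases Nat.eq_zero_or_pos l with rfl | hl
    · simpa using (tendsto_const_nhds : Tendsto (fun _ : ℕ => (1 : ℝ)) atTop (nhds 1))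
    · have : (fun j : ℕ => if l = 0 then ((Nat.choose 0 l : ℝ)) / (j : ℝ) ^ l else 0)
          = fun _ : ℕ => (0 : ℝ) := by
        funext j; rw [if_neg hl.ne']
      rw [this, zero_pow hl.ne', zero_div]
      exact tendsto_const_nhds
  · -- x > 0
    have hprod : Tendsto (fun j : ℕ =>
        (∏ i ∈ Finset.range l, ((⌊(j : ℝ) * x⌋₊ : ℝ) / j - (i : ℝ) / j)) / l.factorial)
        atTop (𝓝 (x ^ l / l.factorial)) := by
      have : Tendsto (fun j : ℕ =>
          ∏ i ∈ Finset.range l, ((⌊(j : ℝ) * x⌋₊ : ℝ) / j - (i : ℝ) / j))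
          atTop (𝓝 (∏ _i ∈ Finset.range l, x)) := by
        refine tendsto_finset_prod _ fun i _ => ?_
        have h2 : Tendsto (fun j : ℕ => (i : ℝ) / j) atTop (𝓝 0) := by
          simpa [div_eq_mul_inv] using tendsto_one_div_atTop_nhds_zero_nat.const_mul (i : ℝ)
        simpa using (floor_div_tendsto hx).sub h2
      rw [Finset.prod_const, Finset.card_range] at this
      exact this.div_const _
    refine Tendsto.congr' ?_ hprod
    have hev : ∀ᶠ j : ℕ in atTop, (l : ℝ) ≤ (j : ℝ) * x := by
      have : Tendsto (fun j : ℕ => (j : ℝ) * x) atTop atTop :=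
        Tendsto.atTop_mul_const hxpos tendsto_natCast_atTop_atTop
      exact this.eventually_ge_atTop _
    filter_upwards [hev, eventually_ge_atTop 1] with j hjl hj1
    have hj0 : (0 : ℝ) < (j : ℝ) := by exact_mod_cast hj1
    have hlM : l ≤ ⌊(j : ℝ) * x⌋₊ := Nat.le_floor hjl
    rw [if_pos hlM, choose_cast_eq hlM]
    have hp : ∏ i ∈ Finset.range l, ((⌊(j : ℝ) * x⌋₊ : ℝ) / j - (i : ℝ) / j)
        = (∏ i ∈ Finset.range l, ((⌊(j : ℝ) * x⌋₊ : ℝ) - i)) / (j : ℝ) ^ l := by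
      calc ∏ i ∈ Finset.range l, ((⌊(j : ℝ) * x⌋₊ : ℝ) / j - (i : ℝ) / j)
          = ∏ i ∈ Finset.range l, (((⌊(j : ℝ) * x⌋₊ : ℝ) - i) / j) :=
            Finset.prod_congr rfl fun i _ => (sub_div _ _ _).symm
        _ = (∏ i ∈ Finset.range l, ((⌊(j : ℝ) * x⌋₊ : ℝ) - i)) /
              ∏ _i ∈ Finset.range l, (j : ℝ) := Finset.prod_div_distrib _ _
        _ = _ := by rw [Finset.prod_const, Finset.card_range]
    rw [hp]
    ring

private lemma bessel_eq {a : ℝ} (ha : -(1 / 2 : ℝ) ≤ a) {x : ℝ} (hx : 0 ≤ x) (y : ℝ) :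
    besselj a ((2 * y * Real.sqrt x : ℝ) : ℂ) =
      ((∑' l : ℕ, x ^ l / l.factorial *
        ((-1 : ℝ) ^ l * (y ^ 2) ^ l / (ascPochhammer ℝ l).eval (a + 1)) : ℝ) : ℂ) := by
  have ha1 : (0 : ℝ) < a + 1 := by linarith
  rw [besselj, Complex.ofReal_tsum]
  refine tsum_congr fun m => ?_
  have hP : (0 : ℝ) < (ascPochhammer ℝ m).eval (a + 1) := ascPochhammer_pos m _ ha1
  have hG : (0 : ℝ) < Real.Gamma (a + 1) := Real.Gamma_pos_of_pos ha1
  have key : ((-1 : ℝ) ^ m * Real.Gamma (a + 1)) /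
      ((m.factorial : ℝ) * Real.Gamma (a + m + 1)) * ((2 * y * Real.sqrt x) / 2) ^ (2 * m)
      = x ^ m / m.factorial *
        ((-1 : ℝ) ^ m * (y ^ 2) ^ m / (ascPochhammer ℝ m).eval (a + 1)) := by
    have h1 : ((2 * y * Real.sqrt x) / 2) ^ (2 * m) = (y ^ 2 * x) ^ m := by
      have : (2 * y * Real.sqrt x) / 2 = y * Real.sqrt x := by ring
      rw [this, pow_mul]
      congr 1
      rw [mul_pow, Real.sq_sqrt hx]
    rw [h1, gamma_poch ha1 m]
    have hfac : (m.factorial : ℝ) ≠ 0 := by exact_mod_cast m.factorial_ne_zero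
    field_simp
    ring
    
  rw [← key]
  push_cast
  ring

/-- For `a ≥ −1/2`, `x ≥ 0` and `y ∈ ℝ`, the normalized Laguerre polynomials converge
to the normalized Bessel function: `lim_{j→∞} L̃_{⌊jx⌋}^a(y²/j) = j_a(2y√x)`. -/
theorem laguerre_tendsto_bessel (a : ℝ) (ha : -(1 / 2 : ℝ) ≤ a) (x : ℝ) (hx : 0 ≤ x) (y : ℝ) :
    Tendsto (fun j : ℕ => ((lagTilde a ⌊(j : ℝ) * x⌋₊ (y ^ 2 / (j : ℝ)) : ℝ) : ℂ))
      atTop (nhds (besselj a ((2 * y * Real.sqrt x : ℝ) : ℂ))) := by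
  have ha1 : (0 : ℝ) < a + 1 := by linarith
  set P : ℕ → ℝ := fun l => (ascPochhammer ℝ l).eval (a + 1) with hPdef
  have hPpos : ∀ l, 0 < P l := fun l => ascPochhammer_pos l _ ha1
  have hPhalf : ∀ l, (1 / 2 : ℝ) ≤ P l := fun l => poch_ge_half ha l
  set M : ℕ → ℕ := fun j => ⌊(j : ℝ) * x⌋₊ with hMdef
  set f : ℕ → ℕ → ℝ := fun j l =>
    (if l ≤ M j then ((M j).choose l : ℝ) / (j : ℝ) ^ l else 0) *
      ((-1 : ℝ) ^ l * (y ^ 2) ^ l / P l) with hfdef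
  set g : ℕ → ℝ := fun l => x ^ l / l.factorial * ((-1 : ℝ) ^ l * (y ^ 2) ^ l / P l)
    with hgdef
  -- Step 1 : identify lagTilde with a tsum
  have step1 : ∀ j : ℕ, lagTilde a (M j) (y ^ 2 / (j : ℝ)) = ∑' l, f j l := by
    intro j
    have hz : ∀ l ∉ Finset.range (M j + 1), f j l = 0 := by
      intro l hl
      have : ¬ l ≤ M j := by simpa [Nat.lt_succ_iff] using hl
      simp [hfdef, this]
    rw [tsum_eq_sum hz, lagTilde]
    refine Finset.sum_congr rfl fun l hl => ?_
    have hl' : l ≤ M j := Nat.lt_succ_iff.mp (Finset.mem_range.mp hl)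
    simp only [hfdef, if_pos hl']
    rw [div_pow]
    ring
  -- Step 2 : pointwise limit
  have step2 : ∀ l : ℕ, Tendsto (fun j => f j l) atTop (𝓝 (g l)) := fun l =>
    (pointwise_choose x hx l).mul_const _
  -- Step 3 : domination
  have hbound_sum : Summable (fun l : ℕ => 2 * ((x * y ^ 2) ^ l / l.factorial)) :=
    (Real.summable_pow_div_factorial (x * y ^ 2)).mul_left 2
  have step3 : ∀ᶠ j : ℕ in atTop, ∀ l : ℕ,
      ‖f j l‖ ≤ 2 * ((x * y ^ 2) ^ l / l.factorial) := by
    filter_upwards [eventually_ge_atTop 1] with j hj1 l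
    have hj0 : (0 : ℝ) < (j : ℝ) := by exact_mod_cast hj1
    have hbnd0 : (0 : ℝ) ≤ (x * y ^ 2) ^ l / l.factorial := by positivity
    by_cases hl : l ≤ M j
    · have habs : ‖f j l‖ = ((M j).choose l : ℝ) / (j : ℝ) ^ l * ((y ^ 2) ^ l / P l) := by
        simp only [hfdef, if_pos hl, Real.norm_eq_abs, abs_mul, abs_div, abs_pow, abs_neg,
          abs_one, one_pow, one_mul, abs_of_nonneg (sq_nonneg y), abs_of_nonneg (hPpos l).le,
          Nat.abs_cast, abs_of_nonneg hj0.le]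
      rw [habs]
      have h1 : ((M j).choose l : ℝ) / (j : ℝ) ^ l ≤ x ^ l / l.factorial := by
        have hMle : (M j : ℝ) ≤ (j : ℝ) * x := Nat.floor_le (by positivity)
        have h2 : ((M j).choose l : ℝ) * l.factorial ≤ ((j : ℝ) * x) ^ l := by
          have h3 : (M j).choose l * l.factorial ≤ (M j) ^ l := by
            rw [mul_comm, ← Nat.descFactorial_eq_factorial_mul_choose]
            exact Nat.descFactorial_le_pow _ _
          calc ((M j).choose l : ℝ) * l.factorial ≤ ((M j : ℝ)) ^ l := by exact_mod_cast h3
          _ ≤ ((j : ℝ) * x) ^ l := pow_le_pow_left₀ (Nat.cast_nonneg _) hMle l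
        have hfac : (0 : ℝ) < l.factorial := by exact_mod_cast l.factorial_pos
        rw [div_le_div_iff₀ (by positivity) hfac]
        calc ((M j).choose l : ℝ) * l.factorial ≤ ((j : ℝ) * x) ^ l := h2
        _ = x ^ l * (j : ℝ) ^ l := by rw [mul_pow]; ring
      have h4 : (y ^ 2) ^ l / P l ≤ 2 * (y ^ 2) ^ l := by
        rw [div_le_iff₀ (hPpos l)]
        have := hPhalf l
        nlinarith [pow_nonneg (sq_nonneg y) l]
      calc ((M j).choose l : ℝ) / (j : ℝ) ^ l * ((y ^ 2) ^ l / P l)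
          ≤ x ^ l / l.factorial * (2 * (y ^ 2) ^ l) := by
            refine mul_le_mul h1 h4 (div_nonneg (by positivity) (hPpos l).le) (by positivity)
        _ = 2 * ((x * y ^ 2) ^ l / l.factorial) := by rw [mul_pow]; ring
    · simp only [hfdef, if_neg hl, zero_mul, norm_zero]
      positivity
  -- Step 4 : Tannery
  have step4 : Tendsto (fun j => ∑' l, f j l) atTop (𝓝 (∑' l, g l)) :=
    tendsto_tsum_of_dominated_convergence hbound_sum step2 step3
  -- conclusion
  have hfun : (fun j : ℕ => ((lagTilde a ⌊(j : ℝ) * x⌋₊ (y ^ 2 / (j : ℝ)) : ℝ) : ℂ))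
      = fun j : ℕ => ((∑' l, f j l : ℝ) : ℂ) := by
    funext j; rw [← step1 j]
  rw [hfun, bessel_eq ha hx y]
  exact (Complex.continuous_ofReal.tendsto _).comp step4
end

section
/- Let a > −1, h > 0 and m ∈ ℕ. For 0 ≤ l ≤ m define the connection coefficients c_{m,l} := (m!/(a+h+1)_m) · ((h)_{m−l}/(m−l)!) · ((a+1)_l/l!). Then c_{m,l} ≥ 0 for all 0 ≤ l ≤ m, Σ_{l=0}^m c_{m,l} = 1, and for every x ∈ ℝ the Laguerre connection formula L̃_m^{a+h}(x) = Σ_{l=0}^m c_{m,l} · L̃_l^a(x) holds. In particular, the normalized Laguerre polynomial with shifted parameter a+h is a convex combination of the normalized Laguerre polynomials with parameter a. -/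
open Finset

/-- The Laguerre connection coefficients
`c_{m,l} = (m!/(a+h+1)_m) · ((h)_{m−l}/(m−l)!) · ((a+1)_l/l!)`. -/
noncomputable def lagConnCoeff (a h : ℝ) (m l : ℕ) : ℝ :=
  ((m.factorial : ℝ) / (ascPochhammer ℝ m).eval (a + h + 1)) *
    ((ascPochhammer ℝ (m - l)).eval h / ((m - l).factorial : ℝ)) *
    ((ascPochhammer ℝ l).eval (a + 1) / (l.factorial : ℝ))

/-- Multiplicativity of the Pochhammer symbol: `(x)_{n+k} = (x)_n (x+n)_k`. -/
lemma pochMul (n k : ℕ) (x : ℝ) :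
    (ascPochhammer ℝ (n + k)).eval x =
      (ascPochhammer ℝ n).eval x * (ascPochhammer ℝ k).eval (x + n) := by
  rw [← ascPochhammer_mul]
  simp [Polynomial.eval_comp]

/-- Chu–Vandermonde identity for Pochhammer symbols. -/
lemma vand (b c : ℝ) (m : ℕ) :
    (ascPochhammer ℝ m).eval (b + c) =
      ∑ l ∈ Finset.range (m + 1), (m.choose l : ℝ) *
        ((ascPochhammer ℝ (m - l)).eval b * (ascPochhammer ℝ l).eval c) := by
  induction m with
  | zero => simp
  | succ m ih =>
    rw [ascPochhammer_succ_eval, ih, Finset.sum_mul]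
    have key : ∀ l ∈ Finset.range (m + 1),
        (m.choose l : ℝ) * ((ascPochhammer ℝ (m - l)).eval b *
          (ascPochhammer ℝ l).eval c) * (b + c + m)
        = (m.choose l : ℝ) * ((ascPochhammer ℝ (m + 1 - l)).eval b *
            (ascPochhammer ℝ l).eval c)
          + (m.choose l : ℝ) * ((ascPochhammer ℝ (m - l)).eval b *
            (ascPochhammer ℝ (l + 1)).eval c) := by
      intro l hl
      have hl' : l ≤ m := Nat.lt_succ_iff.mp (Finset.mem_range.mp hl)
      have hm : m + 1 - l = (m - l) + 1 := by omega
      have hc : ((m - l : ℕ) : ℝ) + l = m := by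
        rw [Nat.cast_sub hl']; ring
      rw [hm, ascPochhammer_succ_eval, ascPochhammer_succ_eval, ← hc]
      ring
    rw [Finset.sum_congr rfl key, Finset.sum_add_distrib]
    have h2 : ∑ l ∈ Finset.range (m + 2), ((m + 1).choose l : ℝ) *
        ((ascPochhammer ℝ (m + 1 - l)).eval b * (ascPochhammer ℝ l).eval c)
        = ∑ l ∈ Finset.range (m + 1), ((m + 1).choose (l + 1) : ℝ) *
            ((ascPochhammer ℝ (m - l)).eval b * (ascPochhammer ℝ (l + 1)).eval c)
          + (ascPochhammer ℝ (m + 1)).eval b := by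
      rw [Finset.sum_range_succ']
      simp
    rw [h2]
    have h3 : ∀ l ∈ Finset.range (m + 1), ((m + 1).choose (l + 1) : ℝ) *
        ((ascPochhammer ℝ (m - l)).eval b * (ascPochhammer ℝ (l + 1)).eval c)
        = (m.choose l : ℝ) *
            ((ascPochhammer ℝ (m - l)).eval b * (ascPochhammer ℝ (l + 1)).eval c)
          + (m.choose (l + 1) : ℝ) *
            ((ascPochhammer ℝ (m - l)).eval b * (ascPochhammer ℝ (l + 1)).eval c) := by
      intro l _
      rw [Nat.choose_succ_succ]
      push_cast
      ring
    rw [Finset.sum_congr rfl h3, Finset.sum_add_distrib]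
    have h4 : ∑ l ∈ Finset.range (m + 2), (m.choose l : ℝ) *
        ((ascPochhammer ℝ (m + 1 - l)).eval b * (ascPochhammer ℝ l).eval c)
        = ∑ l ∈ Finset.range (m + 1), (m.choose (l + 1) : ℝ) *
            ((ascPochhammer ℝ (m - l)).eval b * (ascPochhammer ℝ (l + 1)).eval c)
          + (ascPochhammer ℝ (m + 1)).eval b := by
      rw [Finset.sum_range_succ']
      simp
    have h5 : ∑ l ∈ Finset.range (m + 2), (m.choose l : ℝ) *
        ((ascPochhammer ℝ (m + 1 - l)).eval b * (ascPochhammer ℝ l).eval c)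
        = ∑ l ∈ Finset.range (m + 1), (m.choose l : ℝ) *
            ((ascPochhammer ℝ (m + 1 - l)).eval b * (ascPochhammer ℝ l).eval c) := by
      rw [Finset.sum_range_succ]
      simp
    rw [add_assoc, ← h4, h5]
    ring

/-- Key sum identity. -/
lemma keysum (a h : ℝ) (m l : ℕ) (hl : l ≤ m) :
    ∑ k ∈ Finset.range (m + 1), (m.choose k : ℝ) * (k.choose l : ℝ) *
        ((ascPochhammer ℝ (m - k)).eval h * (ascPochhammer ℝ k).eval (a + 1))
      = (m.choose l : ℝ) * (ascPochhammer ℝ l).eval (a + 1) *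
          (ascPochhammer ℝ (m - l)).eval (h + (a + 1 + l)) := by
  set f : ℕ → ℝ := fun k => (m.choose k : ℝ) * (k.choose l : ℝ) *
    ((ascPochhammer ℝ (m - k)).eval h * (ascPochhammer ℝ k).eval (a + 1)) with hf
  have step1 : ∑ k ∈ Finset.range (m + 1), f k = ∑ k ∈ Finset.Ico l (m + 1), f k := by
    refine (Finset.sum_subset ?_ ?_).symm
    · intro x hx
      simp only [Finset.mem_Ico] at hx
      exact Finset.mem_range.mpr hx.2
    · intro x hx hx'
      simp only [Finset.mem_range] at hx
      have hxl : x < l := by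
        by_contra hc
        exact hx' (Finset.mem_Ico.mpr ⟨Nat.le_of_not_lt hc, hx⟩)
      simp [hf, Nat.choose_eq_zero_of_lt hxl]
  rw [step1, Finset.sum_Ico_eq_sum_range]
  have hml : m + 1 - l = (m - l) + 1 := by omega
  rw [hml]
  have step3 : ∀ j ∈ Finset.range ((m - l) + 1), f (l + j)
      = ((m.choose l : ℝ) * (ascPochhammer ℝ l).eval (a + 1)) *
          (((m - l).choose j : ℝ) * ((ascPochhammer ℝ ((m - l) - j)).eval h *
            (ascPochhammer ℝ j).eval ((a + 1) + l))) := by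
    intro j hj
    have hj' : j ≤ m - l := Nat.lt_succ_iff.mp (Finset.mem_range.mp hj)
    have h1 : l + j ≤ m := by omega
    have h2 : m - (l + j) = (m - l) - j := by omega
    have h3 : (m.choose (l + j) : ℝ) * ((l + j).choose l : ℝ)
        = (m.choose l : ℝ) * ((m - l).choose j : ℝ) := by
      have := Nat.choose_mul (n := m) (k := l + j) (Nat.le_add_right l j)
      have h4 : l + j - l = j := by omega
      rw [h4] at this
      exact_mod_cast congrArg (Nat.cast : ℕ → ℝ) this
    simp only [hf, h2]
    rw [pochMul l j (a + 1)]
    calc (m.choose (l + j) : ℝ) * ((l + j).choose l : ℝ) *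
          ((ascPochhammer ℝ (m - l - j)).eval h *
            ((ascPochhammer ℝ l).eval (a + 1) * (ascPochhammer ℝ j).eval (a + 1 + l)))
        = (m.choose (l + j) : ℝ) * ((l + j).choose l : ℝ) *
            ((ascPochhammer ℝ l).eval (a + 1) *
              ((ascPochhammer ℝ (m - l - j)).eval h *
                (ascPochhammer ℝ j).eval (a + 1 + l))) := by ring
      _ = _ := by rw [h3]; ring
  rw [Finset.sum_congr rfl step3, ← Finset.mul_sum, ← vand h (a + 1 + l) (m - l)]

/-- Positivity of Pochhammer values and the rewritten form of the coefficients. -/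
lemma coeff_eq (a h : ℝ) (m l : ℕ) (hl : l ≤ m) (hP : (ascPochhammer ℝ m).eval (a + h + 1) ≠ 0) :
    lagConnCoeff a h m l = (m.choose l : ℝ) *
      ((ascPochhammer ℝ (m - l)).eval h * (ascPochhammer ℝ l).eval (a + 1)) /
        (ascPochhammer ℝ m).eval (a + h + 1) := by
  unfold lagConnCoeff
  have hfac : (m.choose l : ℝ) * (l.factorial : ℝ) * ((m - l).factorial : ℝ)
      = (m.factorial : ℝ) := by
    exact_mod_cast congrArg (Nat.cast : ℕ → ℝ) (Nat.choose_mul_factorial_mul_factorial hl)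
  have h1 : ((m - l).factorial : ℝ) ≠ 0 := Nat.cast_ne_zero.mpr (Nat.factorial_ne_zero _)
  have h2 : (l.factorial : ℝ) ≠ 0 := Nat.cast_ne_zero.mpr (Nat.factorial_ne_zero _)
  field_simp
  rw [← hfac]
  ring

/-- For `a > −1`, `h > 0` and `m ∈ ℕ`, the connection coefficients `c_{m,l}` are
nonnegative, sum to `1`, and `L̃_m^{a+h} = Σ_{l=0}^m c_{m,l} L̃_l^a`; in particular
`L̃_m^{a+h}` is a convex combination of the `L̃_l^a`. -/
theorem laguerre_connection (a h : ℝ) (ha : -1 < a) (hh : 0 < h) (m : ℕ) :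
    (∀ l ≤ m, 0 ≤ lagConnCoeff a h m l) ∧
      (∑ l ∈ Finset.range (m + 1), lagConnCoeff a h m l = 1) ∧
      ∀ x : ℝ, lagTilde (a + h) m x =
        ∑ l ∈ Finset.range (m + 1), lagConnCoeff a h m l * lagTilde a l x := by
  have ha1 : (0:ℝ) < a + 1 := by linarith
  have hah : (0:ℝ) < a + h + 1 := by linarith
  have hPm : (0:ℝ) < (ascPochhammer ℝ m).eval (a + h + 1) := ascPochhammer_pos m _ hah
  have hPm' : (ascPochhammer ℝ m).eval (a + h + 1) ≠ 0 := ne_of_gt hPm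
  refine ⟨?_, ?_, ?_⟩
  · intro l hl
    have h1 : (0:ℝ) ≤ (ascPochhammer ℝ (m - l)).eval h := le_of_lt (ascPochhammer_pos _ _ hh)
    have h2 : (0:ℝ) ≤ (ascPochhammer ℝ l).eval (a + 1) := le_of_lt (ascPochhammer_pos _ _ ha1)
    unfold lagConnCoeff
    positivity
  · have hsum : ∑ l ∈ Finset.range (m + 1), lagConnCoeff a h m l
        = ∑ l ∈ Finset.range (m + 1), (m.choose l : ℝ) *
            ((ascPochhammer ℝ (m - l)).eval h * (ascPochhammer ℝ l).eval (a + 1)) /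
              (ascPochhammer ℝ m).eval (a + h + 1) := by
      refine Finset.sum_congr rfl fun l hl => ?_
      exact coeff_eq a h m l (Nat.lt_succ_iff.mp (Finset.mem_range.mp hl)) hPm'
    rw [hsum, ← Finset.sum_div, ← vand h (a + 1) m]
    have : h + (a + 1) = a + h + 1 := by ring
    rw [this, div_self hPm']
  · intro x
    -- extend inner sums and swap
    have stepA : ∀ k ∈ Finset.range (m + 1), lagConnCoeff a h m k * lagTilde a k x
        = ∑ l ∈ Finset.range (m + 1), lagConnCoeff a h m k *
            ((k.choose l : ℝ) * ((-1 : ℝ) ^ l / (ascPochhammer ℝ l).eval (a + 1)) * x ^ l) := by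
      intro k hk
      have hk' : k ≤ m := Nat.lt_succ_iff.mp (Finset.mem_range.mp hk)
      unfold lagTilde
      rw [Finset.mul_sum]
      refine Finset.sum_subset (Finset.range_subset_range.mpr (by omega)) ?_
      intro l hl hl'
      have hkl : k < l := by simpa using hl'
      simp [Nat.choose_eq_zero_of_lt hkl]
    rw [Finset.sum_congr rfl stepA, Finset.sum_comm]
    unfold lagTilde
    refine Finset.sum_congr rfl fun l hl => ?_
    have hl' : l ≤ m := Nat.lt_succ_iff.mp (Finset.mem_range.mp hl)
    have hE : (0:ℝ) < (ascPochhammer ℝ l).eval (a + 1) := ascPochhammer_pos _ _ ha1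
    have hstep : ∀ k ∈ Finset.range (m + 1), lagConnCoeff a h m k *
        ((k.choose l : ℝ) * ((-1 : ℝ) ^ l / (ascPochhammer ℝ l).eval (a + 1)) * x ^ l)
        = ((m.choose k : ℝ) * (k.choose l : ℝ) *
            ((ascPochhammer ℝ (m - k)).eval h * (ascPochhammer ℝ k).eval (a + 1))) *
          ((-1 : ℝ) ^ l * x ^ l / ((ascPochhammer ℝ l).eval (a + 1) *
            (ascPochhammer ℝ m).eval (a + h + 1))) := by
      intro k hk
      have hk' : k ≤ m := Nat.lt_succ_iff.mp (Finset.mem_range.mp hk)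
      rw [coeff_eq a h m k hk' hPm']
      ring
    rw [Finset.sum_congr rfl hstep, ← Finset.sum_mul, keysum a h m l hl']
    have hpt : h + (a + 1 + (l:ℝ)) = a + h + 1 + l := by ring
    rw [hpt]
    have hD : (ascPochhammer ℝ m).eval (a + h + 1)
        = (ascPochhammer ℝ l).eval (a + h + 1) *
            (ascPochhammer ℝ (m - l)).eval (a + h + 1 + l) := by
      have := pochMul l (m - l) (a + h + 1)
      rwa [Nat.add_sub_cancel' hl'] at this
    have hF : (0:ℝ) < (ascPochhammer ℝ (m - l)).eval (a + h + 1 + l) := by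
      refine ascPochhammer_pos _ _ ?_
      have : (0:ℝ) ≤ (l:ℝ) := Nat.cast_nonneg l
      linarith
    have hG : (0:ℝ) < (ascPochhammer ℝ l).eval (a + h + 1) := ascPochhammer_pos _ _ hah
    rw [hD]
    field_simp
end

section
/- For every z ∈ ℂ, lim_{μ→+∞} j_μ(2√μ · z) = exp(−z²), where the limit is taken along real μ tending to +∞. -/
open Filter

private lemma gamma_prod (μ : ℝ) (hμ : 0 < μ) (m : ℕ) :
    Real.Gamma (μ + m + 1) = Real.Gamma (μ + 1) * ∏ k ∈ Finset.range m, (μ + k + 1) := by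
  induction m with
  | zero => simp
  | succ n ih =>
    have h1 : (μ + (n + 1 : ℕ) + 1 : ℝ) = (μ + n + 1) + 1 := by push_cast; ring
    rw [h1, Real.Gamma_add_one (by positivity), ih, Finset.prod_range_succ]
    ring

private lemma key (z : ℂ) (μ : ℝ) (hμ : 0 < μ) (m : ℕ) :
    ((-1 : ℂ) ^ m * (Real.Gamma (μ + 1) : ℂ)) /
      ((m.factorial : ℂ) * (Real.Gamma (μ + m + 1) : ℂ)) *
      ((2 * (Real.sqrt μ : ℂ) * z) / 2) ^ (2 * m)
    = (-z ^ 2) ^ m / m.factorial *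
        ((∏ k ∈ Finset.range m, (μ / (μ + k + 1)) : ℝ) : ℂ) := by
  have hG : (0 : ℝ) < Real.Gamma (μ + 1) := Real.Gamma_pos_of_pos (by linarith)
  have hG' : (Real.Gamma (μ + 1) : ℂ) ≠ 0 := by exact_mod_cast hG.ne'
  have hfac : ((m.factorial : ℂ)) ≠ 0 := by exact_mod_cast m.factorial_ne_zero
  have hprod : (∏ k ∈ Finset.range m, ((μ : ℂ) + k + 1)) ≠ 0 :=
    Finset.prod_ne_zero_iff.mpr fun k _ => by
      have h : (0 : ℝ) < μ + k + 1 := by positivity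
      have := h.ne'
      exact_mod_cast this
  have h2 : ((2 * (Real.sqrt μ : ℂ) * z) / 2) = (Real.sqrt μ : ℂ) * z := by ring
  have hs : ((Real.sqrt μ : ℂ)) ^ 2 = (μ : ℂ) := by
    rw [← Complex.ofReal_pow, Real.sq_sqrt hμ.le]
  rw [h2, gamma_prod μ hμ m]
  push_cast [Complex.ofReal_prod]
  rw [mul_pow, pow_mul, pow_mul, hs, Finset.prod_div_distrib, Finset.prod_const,
    Finset.card_range, neg_pow (z ^ 2)]
  field_simp

private lemma ratio_tendsto (c : ℝ) (hc : 0 < c) :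
    Tendsto (fun μ : ℝ => μ / (μ + c)) atTop (nhds 1) := by
  have h : Tendsto (fun μ : ℝ => 1 - c / (μ + c)) atTop (nhds 1) := by
    have := Tendsto.div_atTop (tendsto_const_nhds (x := c))
      (tendsto_atTop_add_const_right atTop c tendsto_id)
    simpa using (tendsto_const_nhds (x := (1 : ℝ))).sub this
  refine h.congr' ?_
  filter_upwards [eventually_gt_atTop 0] with μ hμ
  have : μ + c ≠ 0 := by positivity
  field_simp
  ring

/-- For every `z ∈ ℂ`, `lim_{μ→+∞} j_μ(2√μ · z) = exp(−z²)`, the limit being taken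
along real `μ → +∞`. -/
theorem bessel_tendsto_gaussian (z : ℂ) :
    Tendsto (fun μ : ℝ => besselj μ (2 * (Real.sqrt μ : ℂ) * z)) atTop
      (nhds (Complex.exp (-z ^ 2))) := by
  have hexp : Complex.exp (-z ^ 2) = ∑' m : ℕ, (-z ^ 2) ^ m / m.factorial := by
    rw [Complex.exp_eq_exp_ℂ, NormedSpace.exp_eq_tsum_div]
  rw [hexp]
  simp only [besselj]
  apply tendsto_tsum_of_dominated_convergence
    (bound := fun m : ℕ => ‖z‖ ^ (2 * m) / m.factorial)
  · exact (Real.summable_pow_div_factorial (‖z‖ ^ 2)).congr fun n => by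
      rw [← pow_mul]
  · intro m
    have hP : Tendsto (fun μ : ℝ => (∏ k ∈ Finset.range m, (μ / (μ + k + 1)) : ℝ))
        atTop (nhds 1) := by
      have h1 : (1 : ℝ) = ∏ k ∈ Finset.range m, (1 : ℝ) := by simp
      rw [h1]
      exact tendsto_finset_prod _ fun k _ => by
        simpa [add_assoc] using ratio_tendsto ((k : ℝ) + 1) (by positivity)
    have hPC : Tendsto (fun μ : ℝ =>
        ((∏ k ∈ Finset.range m, (μ / (μ + k + 1)) : ℝ) : ℂ)) atTop (nhds 1) := by
      simpa only [Function.comp_def, Complex.ofReal_one] using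
        (Complex.continuous_ofReal.tendsto 1).comp hP
    have := (tendsto_const_nhds (x := (-z ^ 2) ^ m / (m.factorial : ℂ))).mul hPC
    rw [mul_one] at this
    refine this.congr' ?_
    filter_upwards [eventually_gt_atTop (0 : ℝ)] with μ hμ
    exact (key z μ hμ m).symm
  · filter_upwards [eventually_gt_atTop (0 : ℝ)] with μ hμ
    intro m
    rw [key z μ hμ m]
    have h1 : ‖((-z ^ 2) ^ m / (m.factorial : ℂ))‖ = ‖z‖ ^ (2 * m) / m.factorial := by
      simp [norm_div, norm_pow, pow_mul, Complex.norm_natCast]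
    set P : ℝ := ∏ k ∈ Finset.range m, (μ / (μ + k + 1)) with hPdef
    have hP0 : 0 ≤ P := Finset.prod_nonneg fun k _ => by positivity
    have hP1 : P ≤ 1 := Finset.prod_le_one (fun k _ => by positivity) fun k _ => by
      rw [div_le_one (by positivity)]
      have : (0 : ℝ) ≤ (k : ℝ) := by positivity
      linarith
    calc ‖(-z ^ 2) ^ m / (m.factorial : ℂ) * (P : ℂ)‖
        = (‖z‖ ^ (2 * m) / m.factorial) * |P| := by
          rw [norm_mul, h1, Complex.norm_real, Real.norm_eq_abs]
      _ ≤ (‖z‖ ^ (2 * m) / m.factorial) * 1 := by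
          apply mul_le_mul_of_nonneg_left _ (by positivity)
          rw [abs_of_nonneg hP0]; exact hP1
      _ = ‖z‖ ^ (2 * m) / m.factorial := mul_one _
end

section
/- Let a > −1. Then for every t ∈ ℝ, the function ξ ↦ j_a(2t√ξ) ξ^a e^{−ξ} is integrable on (0,∞) and ∫₀^∞ j_a(2t√ξ) · ξ^a · e^{−ξ} dξ = Γ(a+1) · e^{−t²}. In other words, the Gaussian e^{−t²} is the integral of the normalized Bessel functions ξ ↦ j_a(2t√ξ) against the Gamma probability distribution Γ(a+1)^{−1} ξ^a e^{−ξ} dξ on (0,∞). -/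
open MeasureTheory

/-- For `a > −1` and `t ∈ ℝ`, the function `ξ ↦ j_a(2t√ξ) ξ^a e^{−ξ}` is integrable
on `(0,∞)` and `∫₀^∞ j_a(2t√ξ) ξ^a e^{−ξ} dξ = Γ(a+1) e^{−t²}`: the Gaussian is the
integral of the normalized Bessel functions against the Gamma distribution. -/
theorem bessel_gamma_integral (a : ℝ) (ha : -1 < a) (t : ℝ) :
    IntegrableOn (fun ξ : ℝ =>
        besselj a ((2 * t * Real.sqrt ξ : ℝ) : ℂ) * ((ξ ^ a : ℝ) : ℂ) *
          ((Real.exp (-ξ) : ℝ) : ℂ)) (Set.Ioi 0) ∧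
      ∫ ξ in Set.Ioi (0 : ℝ),
          besselj a ((2 * t * Real.sqrt ξ : ℝ) : ℂ) * ((ξ ^ a : ℝ) : ℂ) *
            ((Real.exp (-ξ) : ℝ) : ℂ) =
        ((Real.Gamma (a + 1) * Real.exp (-t ^ 2) : ℝ) : ℂ) := by
  have ha1 : (0:ℝ) < a + 1 := by linarith
  have hG : ∀ m : ℕ, (0:ℝ) < a + m + 1 := by
    intro m
    have : (0:ℝ) ≤ (m:ℝ) := Nat.cast_nonneg m
    linarith
  set C : ℕ → ℝ := fun m =>
    ((-1 : ℝ) ^ m * Real.Gamma (a + 1) * t ^ (2 * m)) /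
      ((m.factorial : ℝ) * Real.Gamma (a + m + 1)) with hC
  set g : ℕ → ℝ → ℝ := fun m ξ => Real.exp (-ξ) * ξ ^ (a + m) with hg
  set F : ℕ → ℝ → ℂ := fun m ξ => (C m : ℂ) * ((g m ξ : ℝ) : ℂ) with hF
  set μ : Measure ℝ := volume.restrict (Set.Ioi 0) with hμ
  have hΓpos : ∀ m : ℕ, 0 < Real.Gamma (a + m + 1) :=
    fun m => Real.Gamma_pos_of_pos (hG m)
  have hΓ1 : 0 < Real.Gamma (a + 1) := Real.Gamma_pos_of_pos ha1
  -- integrability and integral of each g m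
  have hg_int : ∀ m : ℕ, IntegrableOn (g m) (Set.Ioi 0) := by
    intro m
    have := Real.GammaIntegral_convergent (hG m)
    simpa [hg, show a + (m:ℝ) + 1 - 1 = a + (m:ℝ) by ring] using this
  have hg_val : ∀ m : ℕ, ∫ ξ in Set.Ioi (0:ℝ), g m ξ = Real.Gamma (a + m + 1) := by
    intro m
    rw [Real.Gamma_eq_integral (hG m)]
    simp [hg, show a + (m:ℝ) + 1 - 1 = a + (m:ℝ) by ring]
  have hF_int : ∀ m : ℕ, Integrable (F m) μ := fun m => ((hg_int m).ofReal.const_mul _)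
  -- value of each complex integral
  have hF_val : ∀ m : ℕ, ∫ ξ, F m ξ ∂μ = ((C m * Real.Gamma (a + m + 1) : ℝ) : ℂ) := by
    intro m
    have hco : ∫ ξ, ((g m ξ : ℝ) : ℂ) ∂μ = ((∫ ξ, g m ξ ∂μ : ℝ) : ℂ) := integral_ofReal
    rw [hF]
    rw [integral_const_mul, hco, hμ, hg_val m]
    push_cast
    ring
  -- norm integral of each F m
  have habsC : ∀ m : ℕ, |C m| = Real.Gamma (a + 1) * (t ^ 2) ^ m /
      ((m.factorial : ℝ) * Real.Gamma (a + m + 1)) := by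
    intro m
    rw [hC, abs_div, abs_mul, abs_mul, abs_pow, abs_neg, abs_one, one_pow, one_mul,
      abs_of_pos hΓ1, abs_mul, abs_of_pos (hΓpos m),
      abs_of_nonneg (by positivity : (0:ℝ) ≤ (m.factorial : ℝ)),
      abs_of_nonneg (by rw [pow_mul]; positivity : (0:ℝ) ≤ t ^ (2 * m)), pow_mul]
  have hF_norm : ∀ m : ℕ, ∫ ξ, ‖F m ξ‖ ∂μ = |C m| * Real.Gamma (a + m + 1) := by
    intro m
    have : ∀ ξ ∈ Set.Ioi (0:ℝ), ‖F m ξ‖ = |C m| * g m ξ := by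
      intro ξ hξ
      rw [hF]
      simp only [norm_mul, Complex.norm_real, Real.norm_eq_abs]
      rw [abs_of_nonneg (mul_nonneg (Real.exp_nonneg _) (Real.rpow_nonneg (le_of_lt hξ) _))]
    rw [hμ, setIntegral_congr_fun measurableSet_Ioi this, integral_const_mul,
      hg_val m]
  have hnorm_val : ∀ m : ℕ, |C m| * Real.Gamma (a + m + 1) =
      Real.Gamma (a + 1) * ((t ^ 2) ^ m / (m.factorial : ℝ)) := by
    intro m
    have h1 : Real.Gamma (a + m + 1) ≠ 0 := (hΓpos m).ne'
    have h2 : (m.factorial : ℝ) ≠ 0 := by positivity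
    rw [habsC m]
    field_simp
  have hsum_norm : Summable (fun m : ℕ => ∫ ξ, ‖F m ξ‖ ∂μ) := by
    have : Summable (fun m : ℕ => Real.Gamma (a + 1) * ((t ^ 2) ^ m / (m.factorial : ℝ))) :=
      (Real.summable_pow_div_factorial (t ^ 2)).mul_left _
    refine this.congr fun m => ?_
    rw [hF_norm m, hnorm_val m]
  -- lower bound on Gamma values
  have step : ∀ n : ℕ, Real.Gamma (a + 2) ≤ Real.Gamma (a + 2 + n) := by
    intro n
    induction n with
    | zero => simp
    | succ k ih =>
      have hk : (0:ℝ) ≤ (k:ℝ) := Nat.cast_nonneg k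
      have hpos : (0:ℝ) < a + 2 + k := by linarith
      have h : a + 2 + ((k:ℕ) + 1 : ℕ) = (a + 2 + k) + 1 := by push_cast; ring
      rw [h, Real.Gamma_add_one hpos.ne']
      have hΓ := Real.Gamma_pos_of_pos hpos
      nlinarith
  have hΓlb : ∀ m : ℕ, min (Real.Gamma (a + 1)) (Real.Gamma (a + 2)) ≤
      Real.Gamma (a + m + 1) := by
    intro m
    cases m with
    | zero =>
      simpa using min_le_left (Real.Gamma (a + 1)) (Real.Gamma (a + 2))
    | succ n =>
      refine le_trans (min_le_right _ _) ?_
      have h : a + ((n:ℕ) + 1 : ℕ) + 1 = a + 2 + n := by push_cast; ring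
      rw [h]
      exact step n
  have hcpos : 0 < min (Real.Gamma (a + 1)) (Real.Gamma (a + 2)) :=
    lt_min hΓ1 (Real.Gamma_pos_of_pos (by linarith))
  -- pointwise summability of norms
  have hsum_pt : ∀ ξ ∈ Set.Ioi (0:ℝ), Summable (fun m : ℕ => ‖F m ξ‖) := by
    intro ξ hξ
    have hξ0 : (0:ℝ) < ξ := hξ
    set c := min (Real.Gamma (a + 1)) (Real.Gamma (a + 2))
    have hb : Summable (fun m : ℕ =>
        (Real.Gamma (a + 1) * Real.exp (-ξ) * ξ ^ a / c) * ((t ^ 2 * ξ) ^ m / (m.factorial : ℝ))) :=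
      (Real.summable_pow_div_factorial (t ^ 2 * ξ)).mul_left _
    refine Summable.of_nonneg_of_le (fun m => norm_nonneg _) (fun m => ?_) hb
    have : ‖F m ξ‖ = |C m| * g m ξ := by
      rw [hF]
      simp only [norm_mul, Complex.norm_real, Real.norm_eq_abs]
      rw [abs_of_nonneg (mul_nonneg (Real.exp_nonneg _) (Real.rpow_nonneg hξ0.le _))]
    rw [this, habsC m, hg]
    have hrw : ξ ^ (a + (m:ℝ)) = ξ ^ a * ξ ^ m := by
      rw [Real.rpow_add hξ0, Real.rpow_natCast]
    simp only [hrw]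
    rw [div_mul_eq_mul_div, div_le_iff₀ (mul_pos (by positivity) (hΓpos m))]
    have h1 : Real.Gamma (a + 1) * Real.exp (-ξ) * ξ ^ a / c * ((t ^ 2 * ξ) ^ m / (m.factorial : ℝ)) *
        ((m.factorial : ℝ) * Real.Gamma (a + m + 1)) =
        (Real.Gamma (a + 1) * (t ^ 2) ^ m * (Real.exp (-ξ) * (ξ ^ a * ξ ^ m))) *
          (Real.Gamma (a + m + 1) / c) := by
      field_simp
      ring
    rw [h1]
    have h2 : (1:ℝ) ≤ Real.Gamma (a + m + 1) / c :=
      (one_le_div hcpos).2 (hΓlb m)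
    nlinarith [mul_nonneg (mul_nonneg (mul_nonneg hΓ1.le (pow_nonneg (sq_nonneg t) m))
      (mul_nonneg (Real.exp_nonneg (-ξ)) (mul_nonneg (Real.rpow_nonneg hξ0.le a)
        (pow_nonneg hξ0.le m)))) (le_of_lt hcpos)]
  -- pointwise identity on Ioi 0
  have hpt : ∀ ξ ∈ Set.Ioi (0:ℝ),
      besselj a ((2 * t * Real.sqrt ξ : ℝ) : ℂ) * ((ξ ^ a : ℝ) : ℂ) * ((Real.exp (-ξ) : ℝ) : ℂ)
        = ∑' m : ℕ, F m ξ := by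
    intro ξ hξ
    have hξ0 : (0:ℝ) < ξ := hξ
    have expand : ∀ (f : ℕ → ℂ) (c1 c2 : ℂ),
        (∑' m, f m) * c1 * c2 = ∑' m, f m * c1 * c2 := by
      intro f c1 c2
      rw [tsum_mul_right, tsum_mul_right]
    rw [besselj, expand]
    refine tsum_congr fun m => ?_
    rw [hF]
    have hreal : C m * g m ξ =
        ((-1:ℝ) ^ m * Real.Gamma (a + 1)) / ((m.factorial : ℝ) * Real.Gamma (a + m + 1)) *
          (t * Real.sqrt ξ) ^ (2 * m) * ξ ^ a * Real.exp (-ξ) := by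
      simp only [hC, hg]
      rw [Real.rpow_add hξ0, Real.rpow_natCast, mul_pow, pow_mul t,
        pow_mul (Real.sqrt ξ), Real.sq_sqrt hξ0.le]
      field_simp
    calc ((-1 : ℂ) ^ m * (Real.Gamma (a + 1) : ℂ)) /
          ((m.factorial : ℂ) * (Real.Gamma (a + m + 1) : ℂ)) *
          (((2 * t * Real.sqrt ξ : ℝ) : ℂ) / 2) ^ (2 * m) * ((ξ ^ a : ℝ) : ℂ) *
          ((Real.exp (-ξ) : ℝ) : ℂ)
        = ((C m * g m ξ : ℝ) : ℂ) := by
          rw [hreal]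
          push_cast
          ring
      _ = (C m : ℂ) * ((g m ξ : ℝ) : ℂ) := by push_cast; ring
  -- integrability of the tsum
  have hae : ∀ᵐ ξ ∂μ, ξ ∈ Set.Ioi (0:ℝ) := ae_restrict_mem measurableSet_Ioi
  have hmeas_t : AEStronglyMeasurable (fun ξ => ∑' m : ℕ, F m ξ) μ := by
    refine aestronglyMeasurable_of_tendsto_ae (f := fun N ξ => ∑ m ∈ Finset.range N, F m ξ)
      Filter.atTop (fun N => Finset.aestronglyMeasurable_fun_sum _ fun m _ => (hF_int m).1) ?_
    filter_upwards [hae] with ξ hξ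
    exact ((hsum_pt ξ hξ).of_norm.hasSum.tendsto_sum_nat)
  have hfin_sum : ∑' m : ℕ, ∫⁻ ξ, ‖F m ξ‖₊ ∂μ ≠ ⊤ := by
    have heq : ∀ m : ℕ, ∫⁻ ξ, ‖F m ξ‖₊ ∂μ = ENNReal.ofReal (∫ ξ, ‖F m ξ‖ ∂μ) := by
      intro m
      exact (ofReal_integral_norm_eq_lintegral_enorm (hF_int m)).symm
    simp_rw [heq]
    rw [← ENNReal.ofReal_tsum_of_nonneg (fun m => integral_nonneg fun ξ => norm_nonneg _)
      hsum_norm]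
    exact ENNReal.ofReal_ne_top
  have htsum_int : Integrable (fun ξ => ∑' m : ℕ, F m ξ) μ := by
    refine ⟨hmeas_t, ?_⟩
    show ∫⁻ ξ, (‖∑' m : ℕ, F m ξ‖₊ : ENNReal) ∂μ < ⊤
    calc ∫⁻ ξ, ‖∑' m : ℕ, F m ξ‖₊ ∂μ
        ≤ ∫⁻ ξ, ∑' m : ℕ, (‖F m ξ‖₊ : ENNReal) ∂μ := by
          refine lintegral_mono_ae ?_
          filter_upwards [hae] with ξ hξ
          have hs : Summable (fun m : ℕ => ‖F m ξ‖₊) :=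
            NNReal.summable_coe.mp (by simpa using hsum_pt ξ hξ)
          calc (‖∑' m : ℕ, F m ξ‖₊ : ENNReal)
              ≤ ((∑' m : ℕ, ‖F m ξ‖₊ : NNReal) : ENNReal) :=
                ENNReal.coe_le_coe.2 (nnnorm_tsum_le hs)
            _ = ∑' m : ℕ, (‖F m ξ‖₊ : ENNReal) := ENNReal.coe_tsum hs
      _ = ∑' m : ℕ, ∫⁻ ξ, ‖F m ξ‖₊ ∂μ :=
          lintegral_tsum fun m => (hF_int m).1.enorm
      _ < ⊤ := lt_top_iff_ne_top.2 hfin_sum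
  have haeeq : (fun ξ => ∑' m : ℕ, F m ξ) =ᵐ[μ]
      (fun ξ : ℝ => besselj a ((2 * t * Real.sqrt ξ : ℝ) : ℂ) * ((ξ ^ a : ℝ) : ℂ) *
        ((Real.exp (-ξ) : ℝ) : ℂ)) := by
    filter_upwards [hae] with ξ hξ
    exact (hpt ξ hξ).symm
  have hInt : IntegrableOn (fun ξ : ℝ =>
      besselj a ((2 * t * Real.sqrt ξ : ℝ) : ℂ) * ((ξ ^ a : ℝ) : ℂ) *
        ((Real.exp (-ξ) : ℝ) : ℂ)) (Set.Ioi 0) := htsum_int.congr haeeq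
  refine ⟨hInt, ?_⟩
  -- compute the integral
  have hsum_int_norm : Summable fun m : ℕ => ∫ ξ, ‖F m ξ‖ ∂μ := hsum_norm
  calc ∫ ξ in Set.Ioi (0:ℝ),
        besselj a ((2 * t * Real.sqrt ξ : ℝ) : ℂ) * ((ξ ^ a : ℝ) : ℂ) *
          ((Real.exp (-ξ) : ℝ) : ℂ)
      = ∫ ξ, (∑' m : ℕ, F m ξ) ∂μ := (integral_congr_ae haeeq).symm
    _ = ∑' m : ℕ, ∫ ξ, F m ξ ∂μ :=
        (integral_tsum_of_summable_integral_norm hF_int hsum_int_norm).symm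
    _ = ∑' m : ℕ, ((C m * Real.Gamma (a + m + 1) : ℝ) : ℂ) := by
        exact tsum_congr fun m => hF_val m
    _ = ((∑' m : ℕ, C m * Real.Gamma (a + m + 1) : ℝ) : ℂ) := by
        rw [Complex.ofReal_tsum]
    _ = ((Real.Gamma (a + 1) * Real.exp (-t ^ 2) : ℝ) : ℂ) := by
        congr 1
        have hterm : ∀ m : ℕ, C m * Real.Gamma (a + m + 1) =
            Real.Gamma (a + 1) * ((-t ^ 2) ^ m / (m.factorial : ℝ)) := by
          intro m
          rw [hC]
          have : (-t ^ 2 : ℝ) ^ m = (-1:ℝ) ^ m * t ^ (2 * m) := by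
            rw [neg_pow, pow_mul]
          rw [this]
          have h1 : Real.Gamma (a + m + 1) ≠ 0 := (hΓpos m).ne'
          have h2 : (m.factorial : ℝ) ≠ 0 := by positivity
          field_simp
        simp_rw [hterm]
        rw [tsum_mul_left]
        congr 1
        rw [Real.exp_eq_exp_ℝ, NormedSpace.exp_eq_tsum_div]
end
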